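/- Let (uⁿ) and (Kⁿ) be sequences of continuous real-valued functions on [0,T] converging uniformly to u and K respectively, where each Kⁿ is non-decreasing. Then ∫₀ᵀ uⁿ(t) dKⁿ(t) → ∫₀ᵀ u(t) dK(t) as n → ∞. -/

import Mathlib

open MeasureTheory Set Filter

lemma SIC.cont_leftLim (f : StieltjesFunction ℝ) (hf : Continuous ⇑f) (a : ℝ) :
    Function.leftLim ⇑f a = f a :=
  leftLim_eq_of_tendsto ((hf.tendsto a).mono_left nhdsWithin_le_nhds)

lemma SIC.restrict_Icc_eq_Ioc (f : StieltjesFunction ℝ) (hf : Continuous ⇑f) (a b : ℝ) :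
    f.measure.restrict (Icc a b) = f.measure.restrict (Ioc a b) := by
  refine Measure.restrict_congr_set ?_
  rw [Filter.eventuallyEq_set]
  have h0 : f.measure {a} = 0 := by
    rw [f.measure_singleton, SIC.cont_leftLim f hf, sub_self, ENNReal.ofReal_zero]
  filter_upwards [measure_eq_zero_iff_ae_notMem.mp h0] with x hx
  simp only [mem_Icc, mem_Ioc]
  constructor
  · rintro ⟨h1, h2⟩; exact ⟨lt_of_le_of_ne h1 (fun h => hx (by simp [← h])), h2⟩
  · rintro ⟨h1, h2⟩; exact ⟨h1.le, h2⟩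

/-- Integration by parts / Fubini formula for the Stieltjes integral of a polynomial. -/
lemma SIC.stieltjes_poly (f : StieltjesFunction ℝ) (hf : Continuous ⇑f) (T : ℝ) (hT : 0 < T)
    (p : Polynomial ℝ) :
    ∫ t in Ioc 0 T, p.eval t ∂f.measure
      = p.eval 0 * (f T - f 0)
        + ∫ s in Ioc 0 T, p.derivative.eval s * (f T - f s) := by
  set μ := f.measure with hμ
  have hμfin : μ (Ioc 0 T) ≠ ⊤ := by rw [hμ, f.measure_Ioc]; exact ENNReal.ofReal_ne_top
  haveI : IsFiniteMeasure (μ.restrict (Ioc 0 T)) :=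
    ⟨by rwa [Measure.restrict_apply_univ, lt_top_iff_ne_top]⟩
  haveI : IsFiniteMeasure ((volume : Measure ℝ).restrict (Ioc 0 T)) :=
    ⟨by rw [Measure.restrict_apply_univ, Real.volume_Ioc]; exact ENNReal.ofReal_lt_top⟩
  obtain ⟨C, hC⟩ : ∃ C, ∀ s ∈ Icc (0:ℝ) T, |p.derivative.eval s| ≤ C := by
    obtain ⟨C, hC⟩ := (isCompact_Icc (a := (0:ℝ)) (b := T)).exists_bound_of_continuousOn
      (p.derivative.continuous_aeval).continuousOn
    exact ⟨C, fun s hs => by simpa using hC s hs⟩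
  have ftc : ∀ t : ℝ, 0 ≤ t → p.eval t = p.eval 0 + ∫ s in Ioc 0 t, p.derivative.eval s := by
    intro t ht
    have h1 : ∫ s in (0:ℝ)..t, p.derivative.eval s = p.eval t - p.eval 0 :=
      intervalIntegral.integral_eq_sub_of_hasDerivAt (fun x _ => p.hasDerivAt x)
        ((p.derivative.continuous_aeval).intervalIntegrable 0 t)
    rw [intervalIntegral.integral_of_le ht] at h1
    linarith
  set F : ℝ × ℝ → ℝ := fun q => if q.2 ≤ q.1 then p.derivative.eval q.2 else 0 with hF
  have hFmeas : Measurable F :=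
    Measurable.ite (measurableSet_le measurable_snd measurable_fst)
      ((p.derivative.continuous_aeval).measurable.comp measurable_snd) measurable_const
  have hFint : Integrable F ((μ.restrict (Ioc 0 T)).prod (volume.restrict (Ioc 0 T))) := by
    refine Integrable.mono' (integrable_const C) hFmeas.aestronglyMeasurable ?_
    rw [Measure.prod_restrict]
    filter_upwards [ae_restrict_mem ((measurableSet_Ioc).prod measurableSet_Ioc)] with q hq
    simp only [hF, Real.norm_eq_abs]
    split_ifs with h
    · exact hC q.2 ⟨hq.2.1.le, hq.2.2⟩
    · simpa using (abs_nonneg _).trans (hC 0 ⟨le_rfl, hT.le⟩)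
  have hmass : (μ (Ioc 0 T)).toReal = f T - f 0 := by
    rw [hμ, f.measure_Ioc, ENNReal.toReal_ofReal (sub_nonneg.2 (f.mono hT.le))]
  have claimA : ∀ t ∈ Ioc (0:ℝ) T,
      p.eval t = p.eval 0 + ∫ s in Ioc 0 T, F (t, s) := by
    intro t ht
    have h1 : ∀ s : ℝ, F (t, s) = (Iic t).indicator (fun s => p.derivative.eval s) s := by
      intro s; simp [hF, Set.indicator_apply]
    have h2 : Ioc 0 T ∩ Iic t = Ioc 0 t := by
      ext s
      simp only [mem_inter_iff, mem_Ioc, mem_Iic]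
      exact ⟨fun ⟨⟨h2, _⟩, h4⟩ => ⟨h2, h4⟩, fun ⟨h2, h4⟩ => ⟨⟨h2, h4.trans ht.2⟩, h4⟩⟩
    have : ∫ s in Ioc 0 T, F (t, s) = ∫ s in Ioc 0 t, p.derivative.eval s := by
      simp_rw [h1]
      rw [setIntegral_indicator measurableSet_Iic, h2]
    rw [this]; exact ftc t ht.1.le
  calc ∫ t in Ioc 0 T, p.eval t ∂μ
      = ∫ t in Ioc 0 T, (p.eval 0 + ∫ s in Ioc 0 T, F (t, s)) ∂μ :=
        setIntegral_congr_fun measurableSet_Ioc claimA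
    _ = p.eval 0 * (f T - f 0) + ∫ t in Ioc 0 T, (∫ s in Ioc 0 T, F (t, s)) ∂μ := by
        rw [integral_add (integrable_const _) hFint.integral_prod_left, setIntegral_const,
          smul_eq_mul, measureReal_def, hmass, mul_comm]
    _ = p.eval 0 * (f T - f 0) + ∫ s in Ioc 0 T, (∫ t in Ioc 0 T, F (t, s) ∂μ) := by
        have := integral_integral_swap (μ := μ.restrict (Ioc 0 T))
          (ν := volume.restrict (Ioc 0 T)) (f := fun t s => F (t, s)) hFint
        rw [this]
    _ = p.eval 0 * (f T - f 0) + ∫ s in Ioc 0 T, p.derivative.eval s * (f T - f s) := by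
        congr 1
        apply setIntegral_congr_fun measurableSet_Ioc
        intro s hs
        have h1 : ∀ t : ℝ, F (t, s) = (Ici s).indicator (fun _ => p.derivative.eval s) t := by
          intro t; simp [hF, Set.indicator_apply]
        simp_rw [h1]
        rw [setIntegral_indicator measurableSet_Ici, setIntegral_const]
        have h2 : Ioc 0 T ∩ Ici s = Icc s T := by
          ext t
          simp only [mem_inter_iff, mem_Ioc, mem_Ici, mem_Icc]
          exact ⟨fun ⟨⟨_, h4⟩, h5⟩ => ⟨h5, h4⟩, fun ⟨h4, h5⟩ => ⟨⟨hs.1.trans_le h4, h5⟩, h4⟩⟩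
        rw [h2, hμ, measureReal_def, f.measure_Icc, SIC.cont_leftLim f hf,
          ENNReal.toReal_ofReal (sub_nonneg.2 (f.mono hs.2)), smul_eq_mul, mul_comm]

/-- Weierstrass approximation, pointwise form on `[0,T]`. -/
lemma SIC.exists_poly_near (T : ℝ) (u : ℝ → ℝ) (hu : Continuous u) (δ : ℝ) (hδ : 0 < δ) :
    ∃ p : Polynomial ℝ, ∀ x ∈ Icc (0:ℝ) T, |u x - p.eval x| ≤ δ := by
  set f : C(Icc (0:ℝ) T, ℝ) := ⟨fun x => u x, hu.comp continuous_subtype_val⟩ with hf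
  have hmem : f ∈ closure ((polynomialFunctions (Icc (0:ℝ) T)) : Set C(Icc (0:ℝ) T, ℝ)) := by
    rw [← Subalgebra.topologicalClosure_coe, polynomialFunctions_closure_eq_top]
    trivial
  obtain ⟨q, hq, hdist⟩ := Metric.mem_closure_iff.mp hmem δ hδ
  rw [polynomialFunctions_coe] at hq
  obtain ⟨p, rfl⟩ := hq
  refine ⟨p, fun x hx => ?_⟩
  calc |u x - p.eval x| = dist (f ⟨x, hx⟩) ((p.toContinuousMapOnAlgHom _) ⟨x, hx⟩) := by
        simp [hf, Real.dist_eq, Polynomial.toContinuousMapOnAlgHom_apply,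
          Polynomial.toContinuousMapOn, Polynomial.toContinuousMap]
    _ ≤ dist f (p.toContinuousMapOnAlgHom _) := ContinuousMap.dist_apply_le_dist _
    _ ≤ δ := hdist.le

lemma SIC.abs_setIntegral_le (m : Measure ℝ) {S : Set ℝ} (hS : MeasurableSet S) (hfin : m S ≠ ⊤)
    {g : ℝ → ℝ} {B : ℝ} (hg : ∀ x ∈ S, |g x| ≤ B) :
    |∫ x in S, g x ∂m| ≤ B * (m S).toReal := by
  haveI : IsFiniteMeasure (m.restrict S) :=
    ⟨by rwa [Measure.restrict_apply_univ, lt_top_iff_ne_top]⟩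
  have h := norm_integral_le_of_norm_le_const (μ := m.restrict S) (C := B) (f := g) ?_
  · rwa [measureReal_restrict_apply_univ, measureReal_def, Real.norm_eq_abs] at h
  · filter_upwards [ae_restrict_mem hS] with x hx
    simpa [Real.norm_eq_abs] using hg x hx

set_option maxHeartbeats 1000000 in
/-- If continuous `uₙ → u` and continuous non-decreasing `Kₙ → K` uniformly on `[0,T]`,
then `∫₀ᵀ uₙ dKₙ → ∫₀ᵀ u dK`. -/
theorem stieltjes_integral_convergence (T : ℝ) (hT : 0 < T)
    (un : ℕ → ℝ → ℝ) (Kn : ℕ → StieltjesFunction ℝ)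
    (u : ℝ → ℝ) (K : StieltjesFunction ℝ)
    (hun : ∀ n, Continuous (un n)) (hKn : ∀ n, Continuous ⇑(Kn n))
    (hu : Continuous u) (hK : Continuous ⇑K)
    (huconv : TendstoUniformlyOn (fun n t => un n t) u atTop (Icc 0 T))
    (hKconv : TendstoUniformlyOn (fun n t => Kn n t) (⇑K) atTop (Icc 0 T)) :
    Tendsto (fun n => ∫ t in Icc 0 T, un n t ∂(Kn n).measure) atTop
      (nhds (∫ t in Icc 0 T, u t ∂K.measure)) := by
  have hrw1 : ∀ n, (∫ t in Icc 0 T, un n t ∂(Kn n).measure)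
      = ∫ t in Ioc 0 T, un n t ∂(Kn n).measure := fun n => by
    rw [SIC.restrict_Icc_eq_Ioc _ (hKn n)]
  have hrw2 : (∫ t in Icc 0 T, u t ∂K.measure) = ∫ t in Ioc 0 T, u t ∂K.measure := by
    rw [SIC.restrict_Icc_eq_Ioc _ hK]
  simp only [hrw1, hrw2]
  set M := K T - K 0 with hMdef
  have hM0 : 0 ≤ M := sub_nonneg.2 (K.mono hT.le)
  rw [Metric.tendsto_atTop]
  intro ε hε
  set δ₁ := ε / (8 * (M + 2)) with hδ₁def
  have hδ₁ : 0 < δ₁ := div_pos hε (by nlinarith)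
  obtain ⟨p, hp⟩ := SIC.exists_poly_near T u hu δ₁ hδ₁
  obtain ⟨Cp, hCp⟩ : ∃ C, ∀ s ∈ Icc (0:ℝ) T, |p.derivative.eval s| ≤ C := by
    obtain ⟨C, hC⟩ := (isCompact_Icc (a := (0:ℝ)) (b := T)).exists_bound_of_continuousOn
      (p.derivative.continuous_aeval).continuousOn
    exact ⟨C, fun s hs => by simpa using hC s hs⟩
  have hCp0 : 0 ≤ Cp := le_trans (abs_nonneg _) (hCp 0 ⟨le_rfl, hT.le⟩)
  set b := |p.eval 0| + Cp * T with hbdef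
  have hb0 : 0 ≤ b := by positivity
  set δ₂ := min 1 (ε / (8 * (b + 1))) with hδ₂def
  have hδ₂ : 0 < δ₂ := lt_min one_pos (div_pos hε (by nlinarith))
  have hδ₂1 : δ₂ ≤ 1 := min_le_left _ _
  have hδ₂ε : δ₂ * (8 * (b + 1)) ≤ ε := by
    have h := min_le_right 1 (ε / (8 * (b + 1)))
    calc δ₂ * (8 * (b + 1)) ≤ (ε / (8 * (b + 1))) * (8 * (b + 1)) := by
          apply mul_le_mul_of_nonneg_right h; nlinarith
      _ = ε := div_mul_cancel₀ _ (by nlinarith)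
  have hev1 := Metric.tendstoUniformlyOn_iff.mp huconv δ₁ hδ₁
  have hev2 := Metric.tendstoUniformlyOn_iff.mp hKconv δ₂ hδ₂
  rw [eventually_atTop] at hev1 hev2
  obtain ⟨N₁, hN₁⟩ := hev1
  obtain ⟨N₂, hN₂⟩ := hev2
  refine ⟨max N₁ N₂, fun n hn => ?_⟩
  have h1 : ∀ x ∈ Icc (0:ℝ) T, |u x - un n x| < δ₁ := fun x hx => by
    rw [← Real.dist_eq]; exact hN₁ n (le_trans (le_max_left _ _) hn) x hx
  have h2 : ∀ x ∈ Icc (0:ℝ) T, |K x - Kn n x| < δ₂ := fun x hx => by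
    rw [← Real.dist_eq]; exact hN₂ n (le_trans (le_max_right _ _) hn) x hx
  set f := Kn n with hfdef
  have hfc : Continuous ⇑f := hKn n
  -- finiteness and masses
  have hμnIoc : f.measure (Ioc 0 T) ≠ ⊤ := by rw [f.measure_Ioc]; exact ENNReal.ofReal_ne_top
  have hμIoc : K.measure (Ioc 0 T) ≠ ⊤ := by rw [K.measure_Ioc]; exact ENNReal.ofReal_ne_top
  have hmassn : (f.measure (Ioc 0 T)).toReal = f T - f 0 := by
    rw [f.measure_Ioc, ENNReal.toReal_ofReal (sub_nonneg.2 (f.mono hT.le))]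
  have hmass : (K.measure (Ioc 0 T)).toReal = M := by
    rw [K.measure_Ioc, ENNReal.toReal_ofReal (sub_nonneg.2 (K.mono hT.le))]
  have hT' : (0:ℝ) ∈ Icc (0:ℝ) T := ⟨le_rfl, hT.le⟩
  have hTT : T ∈ Icc (0:ℝ) T := ⟨hT.le, le_rfl⟩
  have hmassn_le : f T - f 0 ≤ M + 2 := by
    have ha := h2 T hTT
    have hb := h2 0 hT'
    have h1a := abs_lt.mp ha
    have h1b := abs_lt.mp hb
    have := hδ₂1
    nlinarith [h1a.1, h1a.2, h1b.1, h1b.2]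
  -- integrability
  have hun_int : IntegrableOn (un n) (Ioc 0 T) f.measure :=
    (((hun n).continuousOn).integrableOn_compact isCompact_Icc).mono_set Ioc_subset_Icc_self
  have hpn_int : IntegrableOn (fun t => p.eval t) (Ioc 0 T) f.measure :=
    ((p.continuous_aeval.continuousOn).integrableOn_compact isCompact_Icc).mono_set
      Ioc_subset_Icc_self
  have hp_int : IntegrableOn (fun t => p.eval t) (Ioc 0 T) K.measure :=
    ((p.continuous_aeval.continuousOn).integrableOn_compact isCompact_Icc).mono_set
      Ioc_subset_Icc_self
  have hu_int : IntegrableOn u (Ioc 0 T) K.measure :=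
    ((hu.continuousOn).integrableOn_compact isCompact_Icc).mono_set Ioc_subset_Icc_self
  -- term A
  have hA : |(∫ t in Ioc 0 T, un n t ∂f.measure) - ∫ t in Ioc 0 T, p.eval t ∂f.measure|
      ≤ 2 * δ₁ * (M + 2) := by
    rw [← integral_sub hun_int hpn_int]
    have hb1 : |∫ t in Ioc 0 T, (un n t - p.eval t) ∂f.measure|
        ≤ (2 * δ₁) * (f.measure (Ioc 0 T)).toReal := by
      refine SIC.abs_setIntegral_le _ measurableSet_Ioc hμnIoc (fun x hx => ?_)
      have hx' : x ∈ Icc (0:ℝ) T := Ioc_subset_Icc_self hx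
      have e1 := (h1 x hx').le
      have e2 := hp x hx'
      calc |un n x - p.eval x| ≤ |un n x - u x| + |u x - p.eval x| := abs_sub_le _ _ _
        _ ≤ δ₁ + δ₁ := add_le_add (by rwa [abs_sub_comm]) e2
        _ = 2 * δ₁ := by ring
    rw [hmassn] at hb1
    calc |∫ t in Ioc 0 T, (un n t - p.eval t) ∂f.measure| ≤ (2 * δ₁) * (f T - f 0) := hb1
      _ ≤ 2 * δ₁ * (M + 2) := by nlinarith
  -- term C
  have hC' : |(∫ t in Ioc 0 T, p.eval t ∂K.measure) - ∫ t in Ioc 0 T, u t ∂K.measure|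
      ≤ δ₁ * M := by
    rw [← integral_sub hp_int hu_int]
    have hb1 : |∫ t in Ioc 0 T, (p.eval t - u t) ∂K.measure|
        ≤ δ₁ * (K.measure (Ioc 0 T)).toReal := by
      refine SIC.abs_setIntegral_le _ measurableSet_Ioc hμIoc (fun x hx => ?_)
      have hx' : x ∈ Icc (0:ℝ) T := Ioc_subset_Icc_self hx
      rw [abs_sub_comm]
      exact hp x hx'
    rwa [hmass] at hb1
  -- term B
  have hB : |(∫ t in Ioc 0 T, p.eval t ∂f.measure) - ∫ t in Ioc 0 T, p.eval t ∂K.measure|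
      ≤ 2 * δ₂ * (b + 1) := by
    rw [SIC.stieltjes_poly f hfc T hT p, SIC.stieltjes_poly K hK T hT p]
    have hint1 : IntegrableOn (fun s => p.derivative.eval s * (f T - f s)) (Ioc 0 T) volume :=
      (((p.derivative.continuous_aeval.mul (continuous_const.sub hfc))).continuousOn).integrableOn_compact
        isCompact_Icc |>.mono_set Ioc_subset_Icc_self
    have hint2 : IntegrableOn (fun s => p.derivative.eval s * (K T - K s)) (Ioc 0 T) volume :=
      (((p.derivative.continuous_aeval.mul (continuous_const.sub hK))).continuousOn).integrableOn_compact
        isCompact_Icc |>.mono_set Ioc_subset_Icc_self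
    have hvol : ((volume : Measure ℝ) (Ioc 0 T)).toReal = T := by
      rw [Real.volume_Ioc, sub_zero, ENNReal.toReal_ofReal hT.le]
    have hvolfin : (volume : Measure ℝ) (Ioc 0 T) ≠ ⊤ := by
      rw [Real.volume_Ioc]; exact ENNReal.ofReal_ne_top
    have hdiff : |(∫ s in Ioc 0 T, p.derivative.eval s * (f T - f s))
        - ∫ s in Ioc 0 T, p.derivative.eval s * (K T - K s)| ≤ (Cp * (2 * δ₂)) * T := by
      rw [← integral_sub hint1 hint2]
      have hb1 : |∫ s in Ioc 0 T, (p.derivative.eval s * (f T - f s)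
          - p.derivative.eval s * (K T - K s))| ≤ (Cp * (2 * δ₂)) * (volume (Ioc 0 T)).toReal := by
        refine SIC.abs_setIntegral_le _ measurableSet_Ioc hvolfin (fun s hs => ?_)
        have hs' : s ∈ Icc (0:ℝ) T := Ioc_subset_Icc_self hs
        have e1 := (h2 T hTT).le
        have e2 := (h2 s hs').le
        have : p.derivative.eval s * (f T - f s) - p.derivative.eval s * (K T - K s)
            = p.derivative.eval s * ((f T - K T) - (f s - K s)) := by ring
        rw [this, abs_mul]
        have e3 : |(f T - K T) - (f s - K s)| ≤ 2 * δ₂ := by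
          calc |(f T - K T) - (f s - K s)| ≤ |f T - K T| + |f s - K s| := abs_sub _ _
            _ ≤ δ₂ + δ₂ := add_le_add (by rwa [abs_sub_comm] at e1) (by rwa [abs_sub_comm] at e2)
            _ = 2 * δ₂ := by ring
        exact mul_le_mul (hCp s hs') e3 (abs_nonneg _) hCp0
      rwa [hvol] at hb1
    have hfirst : |p.eval 0 * (f T - f 0) - p.eval 0 * (K T - K 0)| ≤ |p.eval 0| * (2 * δ₂) := by
      have e1 := (h2 T hTT).le
      have e2 := (h2 0 hT').le
      have : p.eval 0 * (f T - f 0) - p.eval 0 * (K T - K 0)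
          = p.eval 0 * ((f T - K T) - (f 0 - K 0)) := by ring
      rw [this, abs_mul]
      refine mul_le_mul_of_nonneg_left ?_ (abs_nonneg _)
      calc |(f T - K T) - (f 0 - K 0)| ≤ |f T - K T| + |f 0 - K 0| := abs_sub _ _
        _ ≤ δ₂ + δ₂ := add_le_add (by rwa [abs_sub_comm] at e1) (by rwa [abs_sub_comm] at e2)
        _ = 2 * δ₂ := by ring
    calc |(p.eval 0 * (f T - f 0) + ∫ s in Ioc 0 T, p.derivative.eval s * (f T - f s))
        - (p.eval 0 * (K T - K 0) + ∫ s in Ioc 0 T, p.derivative.eval s * (K T - K s))|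
        ≤ |p.eval 0 * (f T - f 0) - p.eval 0 * (K T - K 0)|
          + |(∫ s in Ioc 0 T, p.derivative.eval s * (f T - f s))
            - ∫ s in Ioc 0 T, p.derivative.eval s * (K T - K s)| := by
          rw [add_sub_add_comm]
          exact abs_add_le _ _
      _ ≤ |p.eval 0| * (2 * δ₂) + (Cp * (2 * δ₂)) * T := add_le_add hfirst hdiff
      _ = 2 * δ₂ * b := by rw [hbdef]; ring
      _ ≤ 2 * δ₂ * (b + 1) := by nlinarith
  -- assemble
  rw [Real.dist_eq]
  have htri : |(∫ t in Ioc 0 T, un n t ∂f.measure) - ∫ t in Ioc 0 T, u t ∂K.measure|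
      ≤ |(∫ t in Ioc 0 T, un n t ∂f.measure) - ∫ t in Ioc 0 T, p.eval t ∂f.measure|
        + |(∫ t in Ioc 0 T, p.eval t ∂f.measure) - ∫ t in Ioc 0 T, p.eval t ∂K.measure|
        + |(∫ t in Ioc 0 T, p.eval t ∂K.measure) - ∫ t in Ioc 0 T, u t ∂K.measure| := by
    calc |(∫ t in Ioc 0 T, un n t ∂f.measure) - ∫ t in Ioc 0 T, u t ∂K.measure|
        ≤ |(∫ t in Ioc 0 T, un n t ∂f.measure) - ∫ t in Ioc 0 T, p.eval t ∂K.measure|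
          + |(∫ t in Ioc 0 T, p.eval t ∂K.measure) - ∫ t in Ioc 0 T, u t ∂K.measure| :=
          abs_sub_le _ _ _
      _ ≤ _ := by
          have := abs_sub_le (∫ t in Ioc 0 T, un n t ∂f.measure)
            (∫ t in Ioc 0 T, p.eval t ∂f.measure) (∫ t in Ioc 0 T, p.eval t ∂K.measure)
          linarith
  have hδ₁ε : δ₁ * (8 * (M + 2)) = ε := div_mul_cancel₀ _ (by nlinarith)
  calc |(∫ t in Ioc 0 T, un n t ∂f.measure) - ∫ t in Ioc 0 T, u t ∂K.measure|
      ≤ 2 * δ₁ * (M + 2) + 2 * δ₂ * (b + 1) + δ₁ * M := by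
        have := htri; linarith [hA, hB, hC']
    _ < ε := by nlinarith [hδ₁ε, hδ₂ε, hδ₁, hδ₂, hM0, hb0]
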